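/- arXiv:1601.05123 — 3 statements merged into one kernel-verified Lean document; each statement's English description precedes it below -/
import Mathlib

section
/- There is an absolute constant C > 0 such that for every prime p, all integers K, L, M, N ≥ 1 for which the intervals I = [K+1, K+M] and J = [L+1, L+N] are contained in [1, p-1], and every sequence of complex weights α_m indexed by m ∈ I, one has |∑_{m∈I} ∑_{n∈J} α_m K_p(mn, 1)| ≤ C ‖α‖₂ N^{1/2} p, where ‖α‖₂ = (∑_{m∈I} |α_m|²)^{1/2}. -/
set_option linter.unusedSectionVars false
set_option maxHeartbeats 1000000


/-- `e_p(z) = exp(2πiz/p)`. -/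
noncomputable def ep (p : ℕ) (z : ℤ) : ℂ := Complex.exp (2 * Real.pi * Complex.I * z / p)

/-- the multiplicative inverse of `x` modulo `p`, as a natural number -/
def pinv (p x : ℕ) : ℕ := ((x : ZMod p)⁻¹).val

/-- the Kloosterman sum `K_p(m,n) = ∑_{x=1}^{p-1} e_p(m x + n x̄)` -/
noncomputable def Kl (p : ℕ) (m n : ℤ) : ℂ :=
  ∑ x ∈ Finset.Icc 1 (p - 1), ep p (m * x + n * (pinv p x : ℤ))

section Char
variable (p : ℕ) [hp : Fact p.Prime]

noncomputable def e' (a : ZMod p) : ℂ := ep p a.val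

lemma ep_add (z w : ℤ) : ep p (z + w) = ep p z * ep p w := by
  rw [ep, ep, ep, ← Complex.exp_add]
  congr 1
  push_cast
  ring

lemma e'_eq_std (a : ZMod p) : e' p a = ZMod.stdAddChar a := by
  rw [ZMod.stdAddChar_apply, ZMod.toCircle_apply, e', ep]
  push_cast
  ring_nf

lemma ep_intCast (z : ℤ) : ep p z = e' p (z : ZMod p) := by
  rw [e'_eq_std, ZMod.stdAddChar_coe, ep]

lemma e'_add (a b : ZMod p) : e' p (a + b) = e' p a * e' p b := by
  simp [e'_eq_std, AddChar.map_add_eq_mul]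

lemma e'_zero : e' p 0 = 1 := by
  simp [e', ep, ZMod.val_zero]

lemma e'_ne_zero (a : ZMod p) : e' p a ≠ 0 := Complex.exp_ne_zero _

lemma e'_mul_neg (a : ZMod p) : e' p a * e' p (-a) = 1 := by
  rw [← e'_add]; simp [e'_zero]

lemma conj_ep (z : ℤ) : (starRingEnd ℂ) (ep p z) = ep p (-z) := by
  rw [ep, ep, ← Complex.exp_conj]
  congr 1
  simp [map_div₀, map_ofNat]

lemma conj_e' (a : ZMod p) : (starRingEnd ℂ) (e' p a) = e' p (-a) := by
  have h1 : e' p a = ep p (a.val : ℤ) := rfl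
  rw [h1, conj_ep, ep_intCast]
  congr 1
  push_cast [ZMod.natCast_val]
  simp [ZMod.cast_id]

lemma sum_e'_mul (c : ZMod p) : ∑ a : ZMod p, e' p (a * c) = if c = 0 then (p : ℂ) else 0 := by
  classical
  simp_rw [e'_eq_std]
  rcases eq_or_ne c 0 with rfl | hc
  · simp [ZMod.card]
  · have h1 : (ZMod.stdAddChar (N := p)).mulShift c ≠ 1 :=
      ZMod.isPrimitive_stdAddChar p hc
    have h2 := AddChar.sum_eq_ite ((ZMod.stdAddChar (N := p)).mulShift c)
    rw [if_neg (by rwa [← AddChar.one_eq_zero])] at h2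
    rw [if_neg hc, ← h2]
    apply Finset.sum_congr rfl
    intro a _
    rw [AddChar.mulShift_apply, mul_comm]

lemma sum_e'_nonzero : ∑ a ∈ Finset.univ \ {(0 : ZMod p)}, e' p a = -1 := by
  have h0 : ∑ a : ZMod p, e' p a = 0 := by
    have := sum_e'_mul p 1
    simp only [mul_one] at this
    rwa [if_neg one_ne_zero] at this
  have h1 : ∑ a : ZMod p, e' p a
      = e' p 0 + ∑ a ∈ Finset.univ \ {(0 : ZMod p)}, e' p a := by
    rw [Finset.sum_sdiff_eq_sub (Finset.subset_univ _)]
    simp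
  rw [h0, e'_zero] at h1
  linear_combination -h1
end Char

section KlSec
variable (p : ℕ) [hp : Fact p.Prime]

noncomputable def Kl' (b : ZMod p) : ℂ :=
  ∑ a ∈ Finset.univ \ {(0 : ZMod p)}, e' p (b * a + a⁻¹)

lemma mem_nonzero_of_Icc {x : ℕ} (hx : x ∈ Finset.Icc 1 (p - 1)) :
    ((x : ZMod p) ∈ Finset.univ \ {(0 : ZMod p)}) ∧ (x : ZMod p).val = x := by
  rw [Finset.mem_Icc] at hx
  have hp2 := hp.out.two_le
  have hxlt : x < p := by omega
  have hval : (x : ZMod p).val = x := ZMod.val_cast_of_lt hxlt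
  refine ⟨?_, hval⟩
  simp only [Finset.mem_sdiff, Finset.mem_univ, Finset.mem_singleton, true_and]
  intro h0
  rw [← hval, h0, ZMod.val_zero] at hx
  omega

lemma Kl_eq_Kl' (m : ℤ) : Kl p m 1 = Kl' p (m : ZMod p) := by
  rw [Kl, Kl']
  refine Finset.sum_nbij' (fun x => (x : ZMod p)) (fun a => a.val) ?_ ?_ ?_ ?_ ?_
  · intro x hx; exact (mem_nonzero_of_Icc p hx).1
  · intro a ha
    simp only [Finset.mem_sdiff, Finset.mem_univ, Finset.mem_singleton, true_and] at ha
    rw [Finset.mem_Icc]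
    have h1 : a.val ≠ 0 := fun h => ha ((ZMod.val_eq_zero a).mp h)
    have h2 : a.val < p := ZMod.val_lt a
    have hp2 := hp.out.two_le
    show 1 ≤ a.val ∧ a.val ≤ p - 1
    omega
  · intro x hx; exact (mem_nonzero_of_Icc p hx).2
  · intro a ha; simp [ZMod.natCast_val, ZMod.cast_id]
  · intro x hx
    rw [ep_intCast]
    congr 1
    push_cast [pinv, ZMod.natCast_val, ZMod.cast_id]
    ring

lemma W_eval (c d : ZMod p) (hc : c ≠ 0) (hd : d ≠ 0) :
    ∑ b : ZMod p, Kl' p (b * c) * (starRingEnd ℂ) (Kl' p (b * d))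
      = if c = d then (p : ℂ) * ((p : ℂ) - 1) else -(p : ℂ) := by
  classical
  set N0 : Finset (ZMod p) := Finset.univ \ {(0 : ZMod p)} with hN0
  have hcard : N0.card = p - 1 := by
    rw [hN0, Finset.card_sdiff_of_subset (by simp), Finset.card_univ, ZMod.card, Finset.card_singleton]
  have expand : ∀ b : ZMod p, Kl' p (b * c) * (starRingEnd ℂ) (Kl' p (b * d))
      = ∑ a ∈ N0, ∑ a' ∈ N0, e' p (b * (c * a - d * a')) * e' p (a⁻¹ - a'⁻¹) := by
    intro b
    rw [Kl', Kl', map_sum, Finset.sum_mul_sum]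
    apply Finset.sum_congr rfl
    intro a _
    apply Finset.sum_congr rfl
    intro a' _
    rw [conj_e', ← e'_add,
      show (b * c * a + a⁻¹) + -(b * d * a' + a'⁻¹)
        = b * (c * a - d * a') + (a⁻¹ - a'⁻¹) by ring, e'_add]
  have step1 : ∑ b : ZMod p, Kl' p (b * c) * (starRingEnd ℂ) (Kl' p (b * d))
      = ∑ a ∈ N0, ∑ a' ∈ N0,
          (∑ b : ZMod p, e' p (b * (c * a - d * a'))) * e' p (a⁻¹ - a'⁻¹) := by
    simp_rw [expand]
    rw [Finset.sum_comm]
    apply Finset.sum_congr rfl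
    intro a _
    rw [Finset.sum_comm]
    apply Finset.sum_congr rfl
    intro a' _
    rw [Finset.sum_mul]
  have step2 : ∑ b : ZMod p, Kl' p (b * c) * (starRingEnd ℂ) (Kl' p (b * d))
      = ∑ a ∈ N0, (p : ℂ) * e' p (a⁻¹ - (d⁻¹ * (c * a))⁻¹) := by
    rw [step1]
    apply Finset.sum_congr rfl
    intro a ha
    have ha0 : a ≠ 0 := by
      rw [hN0] at ha
      simp only [Finset.mem_sdiff, Finset.mem_singleton] at ha
      exact ha.2
    have hmem : d⁻¹ * (c * a) ∈ N0 := by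
      rw [hN0]
      simp only [Finset.mem_sdiff, Finset.mem_univ, Finset.mem_singleton, true_and]
      exact mul_ne_zero (inv_ne_zero hd) (mul_ne_zero hc ha0)
    rw [Finset.sum_eq_single_of_mem (d⁻¹ * (c * a)) hmem]
    · rw [sum_e'_mul, if_pos (by rw [mul_inv_cancel_left₀ hd, sub_self])]
    · intro b _ hb
      rw [sum_e'_mul, if_neg, zero_mul]
      intro h
      apply hb
      have : d * b = c * a := by linear_combination -h
      rw [← this, inv_mul_cancel_left₀ hd]
  rw [step2]
  by_cases hcd : c = d
  · subst hcd
    rw [if_pos rfl]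
    have : ∀ a ∈ N0, (p : ℂ) * e' p (a⁻¹ - (c⁻¹ * (c * a))⁻¹) = (p : ℂ) := by
      intro a _
      rw [inv_mul_cancel_left₀ hc, sub_self, e'_zero, mul_one]
    rw [Finset.sum_congr rfl this, Finset.sum_const, hcard, nsmul_eq_mul]
    have hp1 : 1 ≤ p := hp.out.one_le
    push_cast [Nat.cast_sub hp1]
    ring
  · rw [if_neg hcd]
    set k : ZMod p := 1 - c⁻¹ * d with hk
    have hk0 : k ≠ 0 := by
      intro h
      apply hcd
      have h1 : c⁻¹ * d = 1 := by rw [hk] at h; linear_combination -h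
      have := congrArg (c * ·) h1
      simpa [mul_inv_cancel_left₀ hc] using this.symm
    have harg : ∀ a ∈ N0, a⁻¹ - (d⁻¹ * (c * a))⁻¹ = a⁻¹ * k := by
      intro a ha
      have ha0 : a ≠ 0 := by
        rw [hN0] at ha
        simp only [Finset.mem_sdiff, Finset.mem_singleton] at ha
        exact ha.2
      have hinv : (d⁻¹ * (c * a))⁻¹ = a⁻¹ * c⁻¹ * d := by
        rw [mul_inv_rev, mul_inv_rev, inv_inv]
      rw [hinv, hk]
      ring
    have hsum : ∑ a ∈ N0, (p : ℂ) * e' p (a⁻¹ - (d⁻¹ * (c * a))⁻¹)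
        = (p : ℂ) * ∑ a ∈ N0, e' p (a⁻¹ * k) := by
      rw [Finset.mul_sum]
      exact Finset.sum_congr rfl fun a ha => by rw [harg a ha]
    rw [hsum]
    have hre : ∑ a ∈ N0, e' p (a⁻¹ * k) = ∑ u ∈ N0, e' p u := by
      refine Finset.sum_nbij' (fun a => a⁻¹ * k) (fun u => k * u⁻¹) ?_ ?_ ?_ ?_ ?_
      · intro a ha
        rw [hN0] at ha ⊢
        simp only [Finset.mem_sdiff, Finset.mem_univ, Finset.mem_singleton, true_and] at ha ⊢
        exact mul_ne_zero (inv_ne_zero ha) hk0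
      · intro u hu
        rw [hN0] at hu ⊢
        simp only [Finset.mem_sdiff, Finset.mem_univ, Finset.mem_singleton, true_and] at hu ⊢
        exact mul_ne_zero hk0 (inv_ne_zero hu)
      · intro a ha
        rw [hN0] at ha
        simp only [Finset.mem_sdiff, Finset.mem_singleton] at ha
        have ha0 : a ≠ 0 := ha.2
        show k * (a⁻¹ * k)⁻¹ = a
        rw [mul_inv_rev, inv_inv, ← mul_assoc, mul_inv_cancel₀ hk0, one_mul]
      · intro u hu
        rw [hN0] at hu
        simp only [Finset.mem_sdiff, Finset.mem_singleton] at hu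
        have hu0 : u ≠ 0 := hu.2
        show (k * u⁻¹)⁻¹ * k = u
        rw [mul_inv_rev, inv_inv, mul_assoc, inv_mul_cancel₀ hk0, mul_one]
      · intro a _; rfl
    rw [hre, hN0, sum_e'_nonzero]
    ring
end KlSec


theorem bilinear_Kloosterman_l2_bound :
    ∃ C : ℝ, 0 < C ∧
      ∀ p K L M N : ℕ, p.Prime → 1 ≤ K → 1 ≤ L → 1 ≤ M → 1 ≤ N →
        K + M ≤ p - 1 → L + N ≤ p - 1 → ∀ α : ℕ → ℂ,
        ‖∑ m ∈ Finset.Icc (K + 1) (K + M), ∑ n ∈ Finset.Icc (L + 1) (L + N),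
            α m * Kl p ((m : ℤ) * n) 1‖ ≤
          C * Real.sqrt (∑ m ∈ Finset.Icc (K + 1) (K + M), ‖α m‖ ^ 2) *
            Real.sqrt N * p := by
  classical
  refine ⟨2, by norm_num, ?_⟩
  intro p K L M N hp hK hL hM hN hKM hLN α
  haveI : Fact p.Prime := ⟨hp⟩
  have hp2 := hp.two_le
  set I := Finset.Icc (K + 1) (K + M) with hI
  set J := Finset.Icc (L + 1) (L + N) with hJ
  have hIsub : I ⊆ Finset.Icc 1 (p - 1) := by
    intro n hn; rw [hI, Finset.mem_Icc] at hn; rw [Finset.mem_Icc]; omega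
  have hJsub : J ⊆ Finset.Icc 1 (p - 1) := by
    intro n hn; rw [hJ, Finset.mem_Icc] at hn; rw [Finset.mem_Icc]; omega
  have hJcard : J.card = N := by rw [hJ, Nat.card_Icc]; omega
  set T : ZMod p → ℂ := fun b => ∑ n ∈ J, Kl' p (b * (n : ZMod p)) with hT
  have hinner : ∀ m : ℕ, ∑ n ∈ J, Kl p ((m : ℤ) * (n : ℤ)) 1 = T ((m : ℕ) : ZMod p) := by
    intro m
    rw [hT]
    apply Finset.sum_congr rfl
    intro n _
    rw [Kl_eq_Kl']
    congr 1
    push_cast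
    ring
  set A := ∑ m ∈ I, ‖α m‖ ^ 2 with hA
  set B := ∑ b : ZMod p, ‖T b‖ ^ 2 with hB
  set X := ∑ m ∈ I, ‖α m‖ * ‖T ((m : ℕ) : ZMod p)‖ with hX
  have h1 : ‖∑ m ∈ I, ∑ n ∈ J, α m * Kl p ((m : ℤ) * n) 1‖ ≤ X := by
    have hrw : ∑ m ∈ I, ∑ n ∈ J, α m * Kl p ((m : ℤ) * n) 1
        = ∑ m ∈ I, α m * T ((m : ℕ) : ZMod p) := by
      apply Finset.sum_congr rfl
      intro m _
      rw [← Finset.mul_sum, hinner m]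
    rw [hrw, hX]
    exact (norm_sum_le _ _).trans (le_of_eq (by simp [norm_mul]))
  have h2 : X ^ 2 ≤ A * ∑ m ∈ I, ‖T ((m : ℕ) : ZMod p)‖ ^ 2 :=
    Finset.sum_mul_sq_le_sq_mul_sq I _ _
  have hinjI : ∀ a ∈ I, ∀ b ∈ I, (a : ZMod p) = (b : ZMod p) → a = b := by
    intro a ha b hb h
    have ha' := Finset.mem_Icc.mp (hIsub ha)
    have hb' := Finset.mem_Icc.mp (hIsub hb)
    have := congrArg ZMod.val h
    rwa [ZMod.val_cast_of_lt (by omega), ZMod.val_cast_of_lt (by omega)] at this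
  have h3 : ∑ m ∈ I, ‖T ((m : ℕ) : ZMod p)‖ ^ 2 ≤ B := by
    have himg : ∑ b ∈ I.image (fun m : ℕ => (m : ZMod p)), ‖T b‖ ^ 2
        = ∑ m ∈ I, ‖T ((m : ℕ) : ZMod p)‖ ^ 2 := Finset.sum_image hinjI
    rw [← himg]
    exact Finset.sum_le_univ_sum_of_nonneg (fun b => by positivity)
  -- Step E : B ≤ 2 N p^2
  have hBc : ((B : ℝ) : ℂ) = ∑ b : ZMod p, T b * (starRingEnd ℂ) (T b) := by
    rw [hB]
    push_cast
    apply Finset.sum_congr rfl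
    intro b _
    rw [Complex.mul_conj, Complex.normSq_eq_norm_sq]
    push_cast
    ring
  have hW : ∑ b : ZMod p, T b * (starRingEnd ℂ) (T b)
      = ∑ n ∈ J, ∑ n' ∈ J, ∑ b : ZMod p,
          Kl' p (b * (n : ZMod p)) * (starRingEnd ℂ) (Kl' p (b * (n' : ZMod p))) := by
    simp_rw [hT, map_sum, Finset.sum_mul_sum]
    rw [Finset.sum_comm]
    apply Finset.sum_congr rfl
    intro n _
    rw [Finset.sum_comm]
  have hne : ∀ n ∈ J, ((n : ℕ) : ZMod p) ≠ 0 := by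
    intro n hn
    have := (mem_nonzero_of_Icc p (hJsub hn)).1
    simp only [Finset.mem_sdiff, Finset.mem_univ, Finset.mem_singleton, true_and] at this
    exact this
  have hinjJ : ∀ a ∈ J, ∀ b ∈ J, (a : ZMod p) = (b : ZMod p) → a = b := by
    intro a ha b hb h
    have ha' := Finset.mem_Icc.mp (hJsub ha)
    have hb' := Finset.mem_Icc.mp (hJsub hb)
    have := congrArg ZMod.val h
    rwa [ZMod.val_cast_of_lt (by omega), ZMod.val_cast_of_lt (by omega)] at this
  have hterm : ∀ n ∈ J, ∀ n' ∈ J,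
      ‖∑ b : ZMod p, Kl' p (b * (n : ZMod p)) * (starRingEnd ℂ) (Kl' p (b * (n' : ZMod p)))‖
        ≤ if n = n' then (p : ℝ) * p else (p : ℝ) := by
    intro n hn n' hn'
    rw [W_eval p _ _ (hne n hn) (hne n' hn')]
    have hpR : (2 : ℝ) ≤ (p : ℝ) := by exact_mod_cast hp2
    by_cases h : n = n'
    · subst h
      rw [if_pos rfl, if_pos rfl, norm_mul]
      have hnorm : ‖(p : ℂ) - 1‖ = (p : ℝ) - 1 := by
        rw [show ((p : ℂ) - 1) = (((p : ℝ) - 1 : ℝ) : ℂ) by push_cast; ring,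
          Complex.norm_real, Real.norm_eq_abs, abs_of_nonneg (by linarith)]
      rw [hnorm, Complex.norm_natCast]
      nlinarith
    · rw [if_neg h, if_neg (fun hcast => h (hinjJ n hn n' hn' hcast))]
      simp
  have hrowbound : ∀ n ∈ J,
      ∑ n' ∈ J, (if n = n' then (p : ℝ) * p else (p : ℝ)) ≤ (p : ℝ) * p + N * p := by
    intro n hn
    have hfun : ∀ n' ∈ J, (if n = n' then (p : ℝ) * p else (p : ℝ))
        ≤ (if n = n' then (p : ℝ) * p - p else 0) + p := by
      intro n' _
      split_ifs <;> simp
    calc ∑ n' ∈ J, (if n = n' then (p : ℝ) * p else (p : ℝ))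
        ≤ ∑ n' ∈ J, ((if n = n' then (p : ℝ) * p - p else 0) + p) :=
          Finset.sum_le_sum hfun
      _ = (if n ∈ J then (p : ℝ) * p - p else 0) + J.card * p := by
          rw [Finset.sum_add_distrib, Finset.sum_ite_eq, Finset.sum_const, nsmul_eq_mul]
      _ ≤ (p : ℝ) * p + N * p := by
          rw [if_pos hn, hJcard]
          have hpR : (0 : ℝ) ≤ (p : ℝ) := by positivity
          nlinarith
  have hNp : (N : ℝ) ≤ (p : ℝ) := by
    have : N ≤ p := by omega
    exact_mod_cast this
  have hE : B ≤ 2 * N * (p : ℝ) ^ 2 := by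
    have hre : B = (∑ n ∈ J, ∑ n' ∈ J, ∑ b : ZMod p,
        Kl' p (b * (n : ZMod p)) * (starRingEnd ℂ) (Kl' p (b * (n' : ZMod p)))).re := by
      rw [← hW, ← hBc, Complex.ofReal_re]
    have hBle : B ≤ ∑ n ∈ J, ∑ n' ∈ J,
        (if n = n' then (p : ℝ) * p else (p : ℝ)) := by
      rw [hre]
      refine (Complex.re_le_norm _).trans ?_
      refine (norm_sum_le _ _).trans ?_
      refine Finset.sum_le_sum fun n hn => ?_
      refine (norm_sum_le _ _).trans ?_
      exact Finset.sum_le_sum fun n' hn' => hterm n hn n' hn'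
    refine hBle.trans ?_
    calc ∑ n ∈ J, ∑ n' ∈ J, (if n = n' then (p : ℝ) * p else (p : ℝ))
        ≤ ∑ n ∈ J, ((p : ℝ) * p + N * p) := Finset.sum_le_sum hrowbound
      _ = J.card * ((p : ℝ) * p + N * p) := by rw [Finset.sum_const, nsmul_eq_mul]
      _ = N * ((p : ℝ) * p + N * p) := by rw [hJcard]
      _ ≤ 2 * N * (p : ℝ) ^ 2 := by
          have hN0R : (0:ℝ) ≤ (N:ℝ) := by positivity
          have hp0R : (0:ℝ) ≤ (p:ℝ) := by positivity
          nlinarith [hNp, hN0R, hp0R,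
            mul_le_mul_of_nonneg_right (mul_le_mul_of_nonneg_left hNp hN0R) hp0R]
  -- final assembly
  have hA0 : 0 ≤ A := by rw [hA]; positivity
  have hX0 : 0 ≤ X := by
    rw [hX]; exact Finset.sum_nonneg fun m _ => by positivity
  have hN0R : (0:ℝ) ≤ (N:ℝ) := by positivity
  have hp0R : (0:ℝ) ≤ (p:ℝ) := by positivity
  have hfin : X ≤ 2 * Real.sqrt A * Real.sqrt N * p := by
    have hX2 : X ^ 2 ≤ A * (2 * N * (p : ℝ) ^ 2) := by
      refine h2.trans ?_
      have h4 : ∑ m ∈ I, ‖T ((m : ℕ) : ZMod p)‖ ^ 2 ≤ 2 * N * (p : ℝ) ^ 2 := h3.trans hE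
      exact mul_le_mul_of_nonneg_left h4 hA0
    have hXle : X ≤ Real.sqrt (A * (2 * N * (p:ℝ)^2)) :=
      (Real.le_sqrt hX0 (by positivity)).mpr hX2
    have hsplit : Real.sqrt (A * (2 * N * (p:ℝ)^2))
        = Real.sqrt A * Real.sqrt (2 * N * (p:ℝ)^2) := Real.sqrt_mul hA0 _
    have hs2 : Real.sqrt (2 * N * (p:ℝ)^2) ≤ 2 * Real.sqrt N * p := by
      have hsq : (2 * Real.sqrt N * (p:ℝ))^2 = 4 * N * (p:ℝ)^2 := by
        rw [mul_pow, mul_pow, Real.sq_sqrt hN0R]; ring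
      calc Real.sqrt (2 * N * (p:ℝ)^2)
          ≤ Real.sqrt ((2 * Real.sqrt N * (p:ℝ))^2) := by
            apply Real.sqrt_le_sqrt; rw [hsq]; nlinarith [hN0R, hp0R]
        _ = 2 * Real.sqrt N * (p:ℝ) := Real.sqrt_sq (by positivity)
    calc X ≤ Real.sqrt (A * (2 * N * (p:ℝ)^2)) := hXle
      _ = Real.sqrt A * Real.sqrt (2 * N * (p:ℝ)^2) := hsplit
      _ ≤ Real.sqrt A * (2 * Real.sqrt N * p) :=
          mul_le_mul_of_nonneg_left hs2 (Real.sqrt_nonneg A)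
      _ = 2 * Real.sqrt A * Real.sqrt N * p := by ring
  calc ‖∑ m ∈ I, ∑ n ∈ J, α m * Kl p ((m : ℤ) * n) 1‖ ≤ X := h1
    _ ≤ 2 * Real.sqrt A * Real.sqrt N * p := hfin
end

section
/- For every ε > 0 there exists a constant C > 0 such that for every prime p and all integers X, Y with 1 ≤ X, Y < p, the number of pairs of integers (x, y) with 1 ≤ |x| ≤ X, 1 ≤ |y| ≤ Y and xy ≡ 1 (mod p) is at most C (XY/p + 1) p^ε. -/
open Real Finset

lemma key1 (ε : ℝ) (hε : 0 < ε) (k : ℕ) :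
    (k + 1 : ℝ) ≤ (1 + 1 / (ε * Real.log 2)) * (2 : ℝ) ^ (ε * k) := by
  have hl2 : 0 < Real.log 2 := Real.log_pos (by norm_num)
  have hc : 0 < ε * Real.log 2 := by positivity
  have h2 : 1 + ε * k * Real.log 2 ≤ (2:ℝ) ^ (ε * k) := by
    rw [Real.rpow_def_of_pos (by norm_num)]
    have := Real.add_one_le_exp (Real.log 2 * (ε * k))
    linarith [this]
  have h3 : (1 / (ε * Real.log 2)) * (ε * k * Real.log 2) = k := by
    field_simp
  have ht : (0:ℝ) ≤ ε * k * Real.log 2 := by positivity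
  have ha : (0:ℝ) ≤ 1 / (ε * Real.log 2) := by positivity
  calc (k + 1 : ℝ) = 1 + (1 / (ε * Real.log 2)) * (ε * k * Real.log 2) := by
        rw [h3]; ring
    _ ≤ (1 + 1 / (ε * Real.log 2)) * (1 + ε * k * Real.log 2) := by nlinarith
    _ ≤ (1 + 1 / (ε * Real.log 2)) * (2:ℝ) ^ (ε * k) :=
        mul_le_mul_of_nonneg_left h2 (by positivity)

lemma divisor_bound (ε : ℝ) (hε : 0 < ε) :
    ∃ C : ℝ, 1 ≤ C ∧ ∀ n : ℕ, n ≠ 0 → (n.divisors.card : ℝ) ≤ C * (n : ℝ) ^ ε := by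
  have hl2 : 0 < Real.log 2 := Real.log_pos (by norm_num)
  set C₀ : ℝ := 1 + 1 / (ε * Real.log 2) with hC₀def
  have hC₀ : 1 ≤ C₀ := by
    have : 0 ≤ 1 / (ε * Real.log 2) := by positivity
    simp only [hC₀def]; linarith
  set B : ℕ := ⌈(2:ℝ) ^ (1/ε)⌉₊ with hBdef
  refine ⟨C₀ ^ (B + 1), one_le_pow₀ hC₀, ?_⟩
  intro n hn
  set w : ℕ → ℝ := fun p => if p ≤ B then C₀ else 1 with hw
  have hw1 : ∀ p, 1 ≤ w p := by
    intro p; simp only [hw]; split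
    exacts [hC₀, le_refl 1]
  have key : ∀ p ∈ n.primeFactors,
      (n.factorization p + 1 : ℝ) ≤ w p * ((p : ℝ) ^ n.factorization p) ^ ε := by
    intro p hp
    have hpp : p.Prime := Nat.prime_of_mem_primeFactors hp
    have hp2 : (2:ℝ) ≤ p := by exact_mod_cast hpp.two_le
    set k := n.factorization p
    have hppos : (0:ℝ) < p := by linarith
    by_cases hpB : p ≤ B
    · have h2k : ((2:ℝ) ^ k) ^ ε ≤ ((p:ℝ) ^ k) ^ ε :=
        Real.rpow_le_rpow (by positivity) (pow_le_pow_left₀ (by norm_num) hp2 k) hε.le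
      have heq : ((2:ℝ) ^ k) ^ ε = (2:ℝ) ^ (ε * k) := by
        rw [← Real.rpow_natCast 2 k, ← Real.rpow_mul (by norm_num), mul_comm]
      have hk1 := key1 ε hε k
      simp only [hw, if_pos hpB]
      calc (k + 1 : ℝ) ≤ C₀ * (2:ℝ) ^ (ε * k) := hk1
        _ = C₀ * ((2:ℝ) ^ k) ^ ε := by rw [heq]
        _ ≤ C₀ * ((p:ℝ) ^ k) ^ ε := mul_le_mul_of_nonneg_left h2k (by linarith)
    · have hpB' : (2:ℝ) ^ (1/ε) ≤ p := by
        have h1 : (2:ℝ) ^ (1/ε) ≤ B := Nat.le_ceil _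
        have h2 : (B:ℝ) ≤ p := by exact_mod_cast Nat.le_of_lt (Nat.lt_of_not_le hpB)
        linarith
      have hpe : (2:ℝ) ≤ (p:ℝ) ^ ε := by
        have := Real.rpow_le_rpow (by positivity) hpB' hε.le
        rwa [← Real.rpow_mul (by norm_num), one_div_mul_cancel hε.ne', Real.rpow_one] at this
      have h2k : (2:ℝ) ^ k ≤ ((p:ℝ) ^ ε) ^ k := pow_le_pow_left₀ (by norm_num) hpe k
      have hksucc : (k + 1 : ℝ) ≤ (2:ℝ) ^ k := by
        exact_mod_cast Nat.succ_le_of_lt ((Nat.lt_two_pow_self (n := k)))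
      have hrw : ((p:ℝ) ^ ε) ^ k = ((p:ℝ) ^ k) ^ ε := by
        rw [← Real.rpow_natCast ((p:ℝ)^ε) k, ← Real.rpow_mul hppos.le,
            ← Real.rpow_natCast (p:ℝ) k, ← Real.rpow_mul hppos.le, mul_comm]
      simp only [hw, if_neg hpB, one_mul]
      calc (k+1 : ℝ) ≤ (2:ℝ)^k := hksucc
        _ ≤ ((p:ℝ)^ε)^k := h2k
        _ = ((p:ℝ)^k)^ε := hrw
  -- now assemble
  have hcard : (n.divisors.card : ℝ) = ∏ p ∈ n.primeFactors, (n.factorization p + 1 : ℝ) := by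
    rw [Nat.card_divisors hn]
    push_cast
    rfl
  have hprod : (n:ℝ) ^ ε = ∏ p ∈ n.primeFactors, ((p:ℝ) ^ n.factorization p) ^ ε := by
    rw [Real.finset_prod_rpow _ _ (fun i _ => by positivity)]
    congr 1
    exact_mod_cast (Nat.factorization_prod_pow_eq_self hn).symm
  have step1 : (n.divisors.card : ℝ) ≤ ∏ p ∈ n.primeFactors, (w p * ((p:ℝ) ^ n.factorization p) ^ ε) := by
    rw [hcard]
    exact Finset.prod_le_prod (fun i _ => by positivity) key
  have step2 : ∏ p ∈ n.primeFactors, (w p * ((p:ℝ) ^ n.factorization p) ^ ε)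
      = (∏ p ∈ n.primeFactors, w p) * (n:ℝ) ^ ε := by
    rw [Finset.prod_mul_distrib, hprod]
  have step3 : ∏ p ∈ n.primeFactors, w p ≤ C₀ ^ (B + 1) := by
    have hsub : ∏ p ∈ n.primeFactors, w p = ∏ p ∈ n.primeFactors.filter (· ≤ B), C₀ := by
      rw [Finset.prod_filter]
    rw [hsub, Finset.prod_const]
    apply pow_le_pow_right₀ hC₀
    calc (n.primeFactors.filter (· ≤ B)).card ≤ (Finset.range (B+1)).card := by
          apply Finset.card_le_card
          intro x hx
          simp only [Finset.mem_filter] at hx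
          simp [Nat.lt_succ_of_le hx.2]
      _ = B + 1 := Finset.card_range _
  calc (n.divisors.card : ℝ) ≤ (∏ p ∈ n.primeFactors, w p) * (n:ℝ) ^ ε := by
        rw [← step2]; exact step1
    _ ≤ C₀ ^ (B+1) * (n:ℝ) ^ ε := by
        apply mul_le_mul_of_nonneg_right step3 (by positivity)

theorem count_inverse_pairs :
    ∀ ε : ℝ, 0 < ε → ∃ C : ℝ, 0 < C ∧
      ∀ p : ℕ, p.Prime → ∀ X Y : ℤ, 1 ≤ X → X < p → 1 ≤ Y → Y < p →
        (((Finset.Icc (-X) X ×ˢ Finset.Icc (-Y) Y).filter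
            (fun q : ℤ × ℤ => 1 ≤ |q.1| ∧ 1 ≤ |q.2| ∧ (p : ℤ) ∣ q.1 * q.2 - 1)).card : ℝ) ≤
          C * ((X : ℝ) * (Y : ℝ) / (p : ℝ) + 1) * (p : ℝ) ^ ε := by
  intro ε hε
  obtain ⟨C', hC'1, hC'⟩ := divisor_bound (ε/2) (by linarith)
  refine ⟨6 * C', by linarith, ?_⟩
  intro p hp X Y hX hXp hY hYp
  have hp2 : (2:ℤ) ≤ p := by exact_mod_cast hp.two_le
  have hppos : (0:ℤ) < p := by linarith
  have hpR : (2:ℝ) ≤ p := by exact_mod_cast hp2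
  have hpRpos : (0:ℝ) < p := by linarith
  set S := ((Finset.Icc (-X) X ×ˢ Finset.Icc (-Y) Y).filter
      (fun q : ℤ × ℤ => 1 ≤ |q.1| ∧ 1 ≤ |q.2| ∧ (p : ℤ) ∣ q.1 * q.2 - 1)) with hS
  set K : ℤ := (X * Y + 1) / p with hKdef
  have hXY1 : (1:ℤ) ≤ X * Y := one_le_mul_of_one_le_of_one_le hX hY
  have hK0 : 0 ≤ K := Int.ediv_nonneg (by linarith) hppos.le
  have hKp : K * p ≤ X * Y + 1 := Int.ediv_mul_le _ (by omega)
  -- fiber map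
  have hmem : ∀ q ∈ S, (q.1 * q.2 - 1) / (p:ℤ) ∈ Finset.Icc (-K) K := by
    intro q hq
    simp only [hS, Finset.mem_filter, Finset.mem_product, Finset.mem_Icc] at hq
    obtain ⟨⟨⟨hx1, hx2⟩, hy1, hy2⟩, hax, hay, hdvd⟩ := hq
    have hxy : |q.1 * q.2| ≤ X * Y := by
      rw [abs_mul]
      exact mul_le_mul (abs_le.mpr ⟨hx1, hx2⟩) (abs_le.mpr ⟨hy1, hy2⟩) (abs_nonneg _) (by linarith [abs_le.mpr ⟨hx1, hx2⟩, abs_nonneg q.1])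
    have heq : (q.1 * q.2 - 1) / (p:ℤ) * p = q.1 * q.2 - 1 := Int.ediv_mul_cancel hdvd
    rw [Finset.mem_Icc]
    constructor
    · rw [neg_le, ← Int.le_ediv_iff_mul_le hppos] at *
      · rw [Int.le_ediv_iff_mul_le hppos, neg_mul, heq]
        have := abs_le.mp hxy
        linarith
    · rw [hKdef, Int.le_ediv_iff_mul_le hppos, heq]
      have := abs_le.mp hxy
      linarith
  have hsplit : S.card = ∑ k ∈ Finset.Icc (-K) K,
      (S.filter (fun q => (q.1 * q.2 - 1) / (p:ℤ) = k)).card :=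
    Finset.card_eq_sum_card_fiberwise hmem
  -- per-fiber bound
  have hfiber : ∀ k ∈ Finset.Icc (-K) K,
      ((S.filter (fun q => (q.1 * q.2 - 1) / (p:ℤ) = k)).card : ℝ) ≤ 2 * C' * (p:ℝ) ^ ε := by
    intro k hk
    rw [Finset.mem_Icc] at hk
    set n : ℤ := k * p + 1 with hndef
    have hn0 : n ≠ 0 := by
      intro h
      have : (p:ℤ) ∣ 1 := ⟨-k, by linarith⟩
      have := Int.le_of_dvd one_pos this
      linarith
    have hnabs : n.natAbs ≠ 0 := fun h => hn0 (Int.natAbs_eq_zero.mp h)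
    -- each q in fiber satisfies q.1 * q.2 = n
    have hprodn : ∀ q ∈ S.filter (fun q => (q.1 * q.2 - 1) / (p:ℤ) = k),
        q.1 * q.2 = n ∧ 1 ≤ |q.1| := by
      intro q hq
      simp only [hS, Finset.mem_filter, Finset.mem_product] at hq
      obtain ⟨⟨_, hax, _, hdvd⟩, hfq⟩ := hq
      have heq : (q.1 * q.2 - 1) / (p:ℤ) * p = q.1 * q.2 - 1 := Int.ediv_mul_cancel hdvd
      rw [hfq] at heq
      exact ⟨by linarith, hax⟩
    -- inject into Bool × divisors
    have hinj : (S.filter (fun q => (q.1 * q.2 - 1) / (p:ℤ) = k)).card ≤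
        ((Finset.univ : Finset Bool) ×ˢ n.natAbs.divisors).card := by
      apply Finset.card_le_card_of_injOn (fun q => (decide (0 < q.1), q.1.natAbs))
      · intro q hq
        obtain ⟨hqn, hax⟩ := hprodn q hq
        simp only [Finset.mem_product, Finset.mem_univ, true_and, Nat.mem_divisors]
        exact Finset.mem_product.mpr ⟨Finset.mem_univ _, Nat.mem_divisors.mpr ⟨Int.natAbs_dvd_natAbs.mpr ⟨q.2, hqn.symm⟩, hnabs⟩⟩
      · intro q hq q' hq' h
        obtain ⟨hqn, hax⟩ := hprodn q hq
        obtain ⟨hqn', hax'⟩ := hprodn q' hq'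
        simp only [Prod.mk.injEq, decide_eq_decide] at h
        have hx0 : q.1 ≠ 0 := by intro h0; rw [h0] at hax; simp at hax
        have hx0' : q'.1 ≠ 0 := by intro h0; rw [h0] at hax'; simp at hax'
        have hxx : q.1 = q'.1 := by omega
        have hyy : q.2 = q'.2 := by
          apply mul_left_cancel₀ hx0
          rw [hqn, hxx, hqn']
        exact Prod.ext hxx hyy
    have hcard2 : ((Finset.univ : Finset Bool) ×ˢ n.natAbs.divisors).card
        = 2 * n.natAbs.divisors.card := by
      rw [Finset.card_product]; simp
    -- divisor bound
    have hd := hC' n.natAbs hnabs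
    have hnle : (n.natAbs : ℝ) ≤ (p:ℝ) ^ (2:ℕ) := by
      have h1 : |n| ≤ K * p + 1 := by
        calc |n| ≤ |k * p| + 1 := by rw [hndef]; exact (abs_add_le _ _).trans (by simp)
          _ = |k| * p + 1 := by rw [abs_mul, abs_of_pos hppos]
          _ ≤ K * p + 1 := by
              have : |k| ≤ K := abs_le.mpr hk
              nlinarith
      have h2 : |n| ≤ X * Y + 2 := by linarith
      have h3 : X * Y + 2 ≤ p ^ 2 := by nlinarith [hXp, hYp, hX, hY, hp2]
      have h4 : (n.natAbs : ℤ) = |n| := (Int.abs_eq_natAbs n).symm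
      have : (n.natAbs : ℤ) ≤ (p:ℤ) ^ 2 := by rw [h4]; linarith
      exact_mod_cast this
    have hrpow : ((n.natAbs : ℝ)) ^ (ε/2) ≤ (p:ℝ) ^ ε := by
      calc ((n.natAbs : ℝ)) ^ (ε/2) ≤ ((p:ℝ) ^ (2:ℕ)) ^ (ε/2) :=
            Real.rpow_le_rpow (Nat.cast_nonneg _) hnle (by linarith)
        _ = (p:ℝ) ^ ε := by
            rw [← Real.rpow_natCast (p:ℝ) 2, ← Real.rpow_mul hpRpos.le]
            norm_num
            congr 1
            ring
    calc ((S.filter (fun q => (q.1 * q.2 - 1) / (p:ℤ) = k)).card : ℝ)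
        ≤ 2 * (n.natAbs.divisors.card : ℝ) := by
          exact_mod_cast hinj.trans_eq hcard2
      _ ≤ 2 * (C' * (n.natAbs : ℝ) ^ (ε/2)) := by
          apply mul_le_mul_of_nonneg_left hd (by norm_num)
      _ ≤ 2 * C' * (p:ℝ) ^ ε := by
          rw [mul_assoc]
          apply mul_le_mul_of_nonneg_left _ (by norm_num)
          exact mul_le_mul_of_nonneg_left hrpow (by linarith)
  -- sum up
  have hsum : (S.card : ℝ) ≤ ((Finset.Icc (-K) K).card : ℝ) * (2 * C' * (p:ℝ) ^ ε) := by
    rw [hsplit]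
    push_cast
    calc (∑ k ∈ Finset.Icc (-K) K, ((S.filter (fun q => (q.1 * q.2 - 1) / (p:ℤ) = k)).card : ℝ))
        ≤ ∑ k ∈ Finset.Icc (-K) K, (2 * C' * (p:ℝ) ^ ε) := Finset.sum_le_sum hfiber
      _ = ((Finset.Icc (-K) K).card : ℝ) * (2 * C' * (p:ℝ) ^ ε) := by
          rw [Finset.sum_const, nsmul_eq_mul]
  have hcardIcc : ((Finset.Icc (-K) K).card : ℝ) = 2 * (K:ℝ) + 1 := by
    have hz : ((Finset.Icc (-K) K).card : ℤ) = 2 * K + 1 := by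
      rw [Int.card_Icc]
      have h1 : (K + 1 - -K) = 2 * K + 1 := by ring
      rw [h1, Int.toNat_of_nonneg (by linarith)]
    exact_mod_cast hz
  have hKle : (K:ℝ) * (p:ℝ) ≤ (X:ℝ) * (Y:ℝ) + 1 := by exact_mod_cast hKp
  have hXYR : (1:ℝ) ≤ (X:ℝ) * (Y:ℝ) := by exact_mod_cast hXY1
  have hKR : (0:ℝ) ≤ K := by exact_mod_cast hK0
  have hfinal : 2 * (K:ℝ) + 1 ≤ 3 * ((X:ℝ) * (Y:ℝ) / (p:ℝ) + 1) := by
    rw [show 3 * ((X:ℝ) * (Y:ℝ) / (p:ℝ) + 1) = 3 * ((X:ℝ) * (Y:ℝ) + p) / p by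
      field_simp, le_div_iff₀ hpRpos]
    nlinarith
  calc (S.card : ℝ) ≤ ((Finset.Icc (-K) K).card : ℝ) * (2 * C' * (p:ℝ) ^ ε) := hsum
    _ = (2 * (K:ℝ) + 1) * (2 * C' * (p:ℝ) ^ ε) := by rw [hcardIcc]
    _ ≤ 3 * ((X:ℝ) * (Y:ℝ) / (p:ℝ) + 1) * (2 * C' * (p:ℝ) ^ ε) := by
        apply mul_le_mul_of_nonneg_right hfinal
        positivity
    _ = 6 * C' * ((X:ℝ) * (Y:ℝ) / (p:ℝ) + 1) * (p:ℝ) ^ ε := by ring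
end

section
/- For every ε > 0 there exists a constant C > 0 such that for every prime p and all integers M, N with 1 ≤ M, N < p, one has ∑ 1/(‖x‖_p · ‖x̄‖_p) ≤ C (1/p + MN/p²) p^ε, where the sum is over all integers x with 1 ≤ x ≤ p-1, ‖x‖_p > p/M and ‖x̄‖_p > p/N. -/
open Finset Real


/-- `‖u‖_p`: the distance from `u` to the nearest multiple of `p` -/
def dp (p : ℕ) (u : ℤ) : ℕ := min (u % p).toNat (p - (u % p).toNat)



lemma my_sum_image_le {α β : Type*} [DecidableEq α] [DecidableEq β] (s : Finset α) (g : α → β)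
    (h : β → ℝ) (h0 : ∀ b, 0 ≤ h b) : ∑ n ∈ s.image g, h n ≤ ∑ a ∈ s, h (g a) := by
  induction s using Finset.induction with
  | empty => simp
  | insert _ _ hx ih =>
    rename_i a s'
    rw [Finset.image_insert, Finset.sum_insert hx]
    by_cases hg : g a ∈ s'.image g
    · rw [Finset.insert_eq_self.2 hg]
      linarith [h0 (g a)]
    · rw [Finset.sum_insert hg]
      linarith

lemma my_sum_rpow {ε : ℝ} (hε : 0 < ε) (hε1 : ε ≤ 1) (m : ℕ) :
    ∑ k ∈ Finset.Icc 1 m, (k:ℝ)^(ε-1) ≤ (m:ℝ)^ε / ε := by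
  induction m with
  | zero => simp [Real.zero_rpow hε.ne']
  | succ m ih =>
    rw [Finset.sum_Icc_succ_top (by omega)]
    have hy : (0:ℝ) < (m:ℝ) + 1 := by positivity
    have key : (m:ℝ)^ε ≤ ((m:ℝ)+1)^ε - ε * ((m:ℝ)+1)^(ε-1) := by
      have hb : ((1:ℝ) + (-1/((m:ℝ)+1)))^ε ≤ 1 + ε * (-1/((m:ℝ)+1)) := by
        apply rpow_one_add_le_one_add_mul_self _ hε.le hε1
        rw [neg_div, neg_le, neg_neg]
        rw [div_le_one hy]; linarith
      have h2 : (0:ℝ) ≤ ((m:ℝ)+1)^ε := by positivity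
      have h3 : (((m:ℝ)+1) * ((1:ℝ) + (-1/((m:ℝ)+1))))^ε = ((m:ℝ)+1)^ε * ((1:ℝ) + (-1/((m:ℝ)+1)))^ε := by
        apply mul_rpow hy.le
        rw [neg_div, ← sub_eq_add_neg, sub_nonneg, div_le_one hy]; linarith
      have h4 : ((m:ℝ)+1) * ((1:ℝ) + (-1/((m:ℝ)+1))) = (m:ℝ) := by field_simp; ring
      have h5 : ((m:ℝ)+1)^(ε-1) = ((m:ℝ)+1)^ε / ((m:ℝ)+1) := by
        rw [rpow_sub hy, rpow_one]
      rw [h4] at h3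
      rw [h3, h5]
      calc ((m:ℝ)+1)^ε * ((1:ℝ) + (-1/((m:ℝ)+1)))^ε ≤ ((m:ℝ)+1)^ε * (1 + ε * (-1/((m:ℝ)+1))) :=
            mul_le_mul_of_nonneg_left hb h2
        _ = ((m:ℝ)+1)^ε - ε * (((m:ℝ)+1)^ε / ((m:ℝ)+1)) := by ring
    have h6 : ((m:ℝ)+1)^(ε-1) ≤ (((m:ℝ)+1)^ε - (m:ℝ)^ε)/ε := by
      rw [le_div_iff₀ hε]; linarith
    have h7 : (m:ℝ)^ε/ε + (((m:ℝ)+1)^ε - (m:ℝ)^ε)/ε = ((m:ℝ)+1)^ε/ε := by ring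
    push_cast
    linarith

lemma my_divisor_bound {ε : ℝ} (hε : 0 < ε) :
    ∃ C : ℝ, 1 ≤ C ∧ ∀ n : ℕ, (n.divisors.card : ℝ) ≤ C * (n:ℝ)^ε := by
  classical
  set K : ℝ := max 1 (2/(ε * Real.log 2)) with hKdef
  have hK1 : (1:ℝ) ≤ K := le_max_left _ _
  have hlog2 : (0:ℝ) < Real.log 2 := Real.log_pos (by norm_num)
  set T : ℕ := ⌈(2:ℝ)^(1/ε)⌉₊ with hTdef
  refine ⟨K^T, by calc (1:ℝ) = 1^T := (one_pow T).symm
    _ ≤ K^T := pow_le_pow_left₀ (by norm_num) hK1 T, ?_⟩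
  intro n
  rcases eq_or_ne n 0 with rfl | hn
  · simp [Real.zero_rpow hε.ne']
  have h0 : ∏ q ∈ n.primeFactors, q ^ n.factorization q = n := by
    have := Nat.factorization_prod_pow_eq_self hn
    rwa [Finsupp.prod, Nat.support_factorization] at this
  have hrpow : (n:ℝ)^ε = ∏ q ∈ n.primeFactors, (q:ℝ)^((n.factorization q : ℝ) * ε) := by
    conv_lhs => rw [← h0]
    push_cast
    rw [← Real.finset_prod_rpow _ _ (fun q hq => by positivity) ε]
    refine Finset.prod_congr rfl (fun q hq => ?_)
    rw [← Real.rpow_natCast (q:ℝ) (n.factorization q), ← Real.rpow_mul (Nat.cast_nonneg q)]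
  have pointwise : ∀ q ∈ n.primeFactors,
      ((n.factorization q : ℝ) + 1) ≤
        (if (q:ℝ)^ε < 2 then K else 1) * (q:ℝ)^((n.factorization q : ℝ) * ε) := by
    intro q hq
    have hqp : q.Prime := Nat.prime_of_mem_primeFactors hq
    have hq2 : (2:ℝ) ≤ (q:ℝ) := by exact_mod_cast hqp.two_le
    have hq0 : (0:ℝ) ≤ (q:ℝ) := by linarith
    set a : ℕ := n.factorization q with ha
    have ha1 : 1 ≤ a := (Nat.Prime.factorization_pos_of_dvd hqp hn
      (Nat.dvd_of_mem_primeFactors hq))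
    by_cases hsmall : (q:ℝ)^ε < 2
    · rw [if_pos hsmall]
      have e1 : (2:ℝ)^((a:ℝ)*ε) ≤ (q:ℝ)^((a:ℝ)*ε) :=
        Real.rpow_le_rpow (by norm_num) hq2 (by positivity)
      have e2 : (a:ℝ)*ε*Real.log 2 ≤ (2:ℝ)^((a:ℝ)*ε) := by
        rw [Real.rpow_def_of_pos (by norm_num : (0:ℝ) < 2)]
        calc (a:ℝ)*ε*Real.log 2 = Real.log 2 * ((a:ℝ)*ε) := by ring
          _ ≤ Real.log 2 * ((a:ℝ)*ε) + 1 := by linarith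
          _ ≤ Real.exp (Real.log 2 * ((a:ℝ)*ε)) := Real.add_one_le_exp _
      have e3 : (2/(ε * Real.log 2)) * ((a:ℝ)*ε*Real.log 2) = 2*(a:ℝ) := by
        field_simp
      have hKge : 2/(ε * Real.log 2) ≤ K := le_max_right _ _
      have ha1' : (1:ℝ) ≤ (a:ℝ) := by exact_mod_cast ha1
      have hy0 : (0:ℝ) ≤ (a:ℝ)*ε*Real.log 2 := by positivity
      have hc0 : (0:ℝ) ≤ 2/(ε * Real.log 2) := by positivity
      calc ((a:ℝ) + 1) ≤ 2*(a:ℝ) := by linarith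
        _ = (2/(ε * Real.log 2)) * ((a:ℝ)*ε*Real.log 2) := e3.symm
        _ ≤ K * (q:ℝ)^((a:ℝ)*ε) := by
            apply mul_le_mul hKge (le_trans e2 e1) hy0 (by linarith)
    · rw [if_neg hsmall]
      push_neg at hsmall
      rw [one_mul]
      have n1 : (a:ℝ) + 1 ≤ (2:ℝ)^(a:ℕ) := by
        exact_mod_cast Nat.succ_le_of_lt (Nat.lt_two_pow_self (n := a))
      have n2 : (2:ℝ)^(a:ℕ) ≤ ((q:ℝ)^ε)^(a:ℕ) :=
        pow_le_pow_left₀ (by norm_num) hsmall a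
      have n3 : ((q:ℝ)^ε)^(a:ℕ) = (q:ℝ)^((a:ℝ)*ε) := by
        rw [← Real.rpow_natCast ((q:ℝ)^ε) a, ← Real.rpow_mul hq0, mul_comm]
      linarith [n3 ▸ n2]
  rw [Nat.card_divisors hn]
  push_cast
  calc ∏ q ∈ n.primeFactors, ((n.factorization q : ℝ) + 1)
      ≤ ∏ q ∈ n.primeFactors,
          (if (q:ℝ)^ε < 2 then K else 1) * (q:ℝ)^((n.factorization q : ℝ) * ε) :=
        Finset.prod_le_prod (fun q _ => by positivity) pointwise
    _ = (∏ q ∈ n.primeFactors, if (q:ℝ)^ε < 2 then K else 1) *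
          ∏ q ∈ n.primeFactors, (q:ℝ)^((n.factorization q : ℝ) * ε) :=
        Finset.prod_mul_distrib
    _ ≤ K^T * (n:ℝ)^ε := by
        rw [← hrpow]
        apply mul_le_mul _ le_rfl (by positivity)
          (by positivity)
        rw [Finset.prod_ite, Finset.prod_const, Finset.prod_const, one_pow, mul_one]
        apply pow_le_pow_right₀ hK1
        have hsub : (n.primeFactors.filter (fun q : ℕ => (q:ℝ)^ε < 2)) ⊆ Finset.range T := by
          intro q hq
          rw [Finset.mem_filter] at hq
          rw [Finset.mem_range]
          have hqp : q.Prime := Nat.prime_of_mem_primeFactors hq.1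
          have hq0 : (0:ℝ) ≤ (q:ℝ) := Nat.cast_nonneg q
          have : (q:ℝ) < (2:ℝ)^(1/ε) := by
            have := Real.rpow_lt_rpow (by positivity) hq.2 (by positivity : (0:ℝ) < 1/ε)
            rwa [← Real.rpow_mul hq0, mul_one_div, div_self hε.ne', Real.rpow_one] at this
          have hT : ((2:ℝ))^(1/ε) ≤ (T:ℝ) := Nat.le_ceil _
          exact_mod_cast lt_of_lt_of_le this hT
        calc (n.primeFactors.filter (fun q : ℕ => (q:ℝ)^ε < 2)).card
            ≤ (Finset.range T).card := Finset.card_le_card hsub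
          _ = T := Finset.card_range T


lemma dp_nat_eq {p x : ℕ} (hx : x < p) : dp p (x:ℤ) = min x (p - x) := by
  have h1 : ((x:ℤ) % (p:ℤ)) = (x:ℤ) :=
    Int.emod_eq_of_lt (Int.natCast_nonneg x) (by exact_mod_cast hx)
  simp [dp, h1]
lemma key_facts {p M N : ℕ} (hp : p.Prime) (hMp : M < p) (hNp : N < p) (x : ℕ)
    (hx1 : 1 ≤ x) (hx2 : x ≤ p - 1)
    (hc1 : (p : ℝ) < M * dp p x) (hc2 : (p : ℝ) < N * dp p (pinv p x)) :
    2 ≤ dp p x ∧ 2 ≤ dp p (pinv p x) ∧ 2 * dp p x ≤ p ∧ 2 * dp p (pinv p x) ≤ p ∧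
      (((dp p x * dp p (pinv p x) : ℕ) : ZMod p) = 1 ∨
        ((dp p x * dp p (pinv p x) : ℕ) : ZMod p) = -1) := by
  haveI : Fact p.Prime := ⟨hp⟩
  haveI : NeZero p := ⟨hp.pos.ne'⟩
  have hp2 := hp.two_le
  have hxp : x < p := by omega
  have hdx : dp p (x:ℤ) = min x (p - x) := dp_nat_eq hxp
  set v := pinv p x with hv
  have hvp : v < p := ZMod.val_lt _
  have hdv : dp p (v:ℤ) = min v (p - v) := dp_nat_eq hvp
  have ha2 : 2 * dp p (x:ℤ) ≤ p := by rw [hdx]; omega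
  have hb2 : 2 * dp p (v:ℤ) ≤ p := by rw [hdv]; omega
  have hMR : (M:ℝ) < (p:ℝ) := by exact_mod_cast hMp
  have hNR : (N:ℝ) < (p:ℝ) := by exact_mod_cast hNp
  have haM : 2 ≤ dp p (x:ℤ) := by
    by_contra h
    have h1 : (dp p (x:ℤ) : ℝ) ≤ 1 := by exact_mod_cast (by omega : dp p (x:ℤ) ≤ 1)
    have h2 : (M:ℝ) * dp p (x:ℤ) ≤ (M:ℝ) * 1 :=
      mul_le_mul_of_nonneg_left h1 (Nat.cast_nonneg M)
    linarith
  have hbN : 2 ≤ dp p (v:ℤ) := by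
    by_contra h
    have h1 : (dp p (v:ℤ) : ℝ) ≤ 1 := by exact_mod_cast (by omega : dp p (v:ℤ) ≤ 1)
    have h2 : (N:ℝ) * dp p (v:ℤ) ≤ (N:ℝ) * 1 :=
      mul_le_mul_of_nonneg_left h1 (Nat.cast_nonneg N)
    linarith
  refine ⟨haM, hbN, ha2, hb2, ?_⟩
  have hxv : (x : ZMod p) * (v : ZMod p) = 1 := by
    rw [hv, pinv, ZMod.natCast_rightInverse _]
    apply mul_inv_cancel₀
    rw [Ne, ZMod.natCast_eq_zero_iff]
    intro hdvd
    have := Nat.le_of_dvd (by omega) hdvd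
    omega
  have hxz : ((dp p (x:ℤ) : ℕ) : ZMod p) = (x : ZMod p) ∨
      ((dp p (x:ℤ) : ℕ) : ZMod p) = -(x : ZMod p) := by
    rw [hdx]
    rcases min_choice x (p - x) with h | h <;> rw [h]
    · left; rfl
    · right; rw [Nat.cast_sub hxp.le, ZMod.natCast_self, zero_sub]
  have hvz : ((dp p (v:ℤ) : ℕ) : ZMod p) = (v : ZMod p) ∨
      ((dp p (v:ℤ) : ℕ) : ZMod p) = -(v : ZMod p) := by
    rw [hdv]
    rcases min_choice v (p - v) with h | h <;> rw [h]
    · left; rfl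
    · right; rw [Nat.cast_sub hvp.le, ZMod.natCast_self, zero_sub]
  rw [Nat.cast_mul]
  rcases hxz with h1 | h1 <;> rcases hvz with h2 | h2 <;> rw [h1, h2]
  · left; exact hxv
  · right; rw [mul_neg, hxv]
  · right; rw [neg_mul, hxv]
  · left; rw [neg_mul_neg, hxv]

noncomputable def hdiv (y : ℕ) : ℝ := 2 * (y.divisors.card : ℝ) * (1/(y:ℝ))

lemma hdiv_nonneg (y : ℕ) : 0 ≤ hdiv y := by unfold hdiv; positivity

theorem sum_inverse_dist_bound_S4 :
    ∀ ε : ℝ, 0 < ε → ∃ C : ℝ, 0 < C ∧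
      ∀ p M N : ℕ, p.Prime → 1 ≤ M → M < p → 1 ≤ N → N < p →
        ∑ x ∈ (Finset.Icc 1 (p - 1)).filter
            (fun x : ℕ => (p : ℝ) < M * dp p x ∧ (p : ℝ) < N * dp p (pinv p x)),
            (1 : ℝ) / ((dp p x : ℝ) * (dp p (pinv p x) : ℝ)) ≤
          C * (1 / (p : ℝ) + (M : ℝ) * N / (p : ℝ) ^ 2) * (p : ℝ) ^ ε := by
  intro ε hε
  have hmin : 0 < min ε 1 := lt_min hε one_pos
  have hδ0 : 0 < min ε 1 / 2 := by positivity
  obtain ⟨C₀, hC₀1, hC₀⟩ := my_divisor_bound hδ0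
  set δ : ℝ := min ε 1 / 2 with hδdef
  have hδ1 : δ ≤ 1 := by
    have : min ε 1 ≤ 1 := min_le_right _ _
    rw [hδdef]; linarith
  have hC₀0 : (0:ℝ) < C₀ := lt_of_lt_of_le one_pos hC₀1
  refine ⟨16*C₀/δ, by positivity, ?_⟩
  intro p M N hp hM1 hMp hN1 hNp
  haveI : Fact p.Prime := ⟨hp⟩
  haveI : NeZero p := ⟨hp.pos.ne'⟩
  have hp2 : 2 ≤ p := hp.two_le
  have hpR : (0:ℝ) < p := by exact_mod_cast hp.pos
  have hpR1 : (1:ℝ) ≤ p := by exact_mod_cast hp.pos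
  classical
  set F := (Finset.Icc 1 (p - 1)).filter
      (fun x : ℕ => (p : ℝ) < M * dp p x ∧ (p : ℝ) < N * dp p (pinv p x)) with hF
  set g : ℕ → ℕ := fun x => dp p x * dp p (pinv p x) with hg
  have hkey : ∀ x ∈ F, 2 ≤ dp p x ∧ 2 ≤ dp p (pinv p x) ∧ 2 * dp p x ≤ p ∧
      2 * dp p (pinv p x) ≤ p ∧
      ((g x : ZMod p) = 1 ∨ (g x : ZMod p) = -1) := by
    intro x hx
    rw [hF, Finset.mem_filter, Finset.mem_Icc] at hx
    exact key_facts hp hMp hNp x hx.1.1 hx.1.2 hx.2.1 hx.2.2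
  set G : ℕ × Bool → ℕ := fun q => if q.2 then q.1*p+1 else q.1*p-1 with hG
  have hrep : ∀ y ∈ F.image g, y ∈ (Finset.Icc 1 p ×ˢ (Finset.univ : Finset Bool)).image G := by
    intro y hy
    obtain ⟨x, hxF, rfl⟩ := Finset.mem_image.1 hy
    obtain ⟨ha2, hb2, hap, hbp, hcong⟩ := hkey x hxF
    have hn4 : 4 ≤ g x := by
      calc 4 = 2*2 := rfl
        _ ≤ dp p x * dp p (pinv p x) := Nat.mul_le_mul ha2 hb2
    have hn4p : 4 * g x ≤ p * p := by
      calc 4 * g x = (2 * dp p x) * (2 * dp p (pinv p x)) := by rw [hg]; ring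
        _ ≤ p * p := Nat.mul_le_mul hap hbp
    rw [Finset.mem_image]
    rcases hcong with hc | hc
    · have hdvd : p ∣ g x - 1 := by
        rw [← ZMod.natCast_eq_zero_iff, Nat.cast_sub (by omega), hc]
        simp
      obtain ⟨k, hk⟩ := hdvd
      have hk1 : 1 ≤ k := by
        rcases Nat.eq_zero_or_pos k with rfl | hpos
        · simp at hk; omega
        · exact hpos
      have hkp : k ≤ p := by
        have hlt : p * k < p * p := by omega
        exact (Nat.lt_of_mul_lt_mul_left hlt).le
      refine ⟨(k, true), ?_, ?_⟩
      · rw [Finset.mem_product, Finset.mem_Icc]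
        exact ⟨⟨hk1, hkp⟩, Finset.mem_univ _⟩
      · show (if true = true then k*p+1 else k*p-1) = g x
        rw [if_pos rfl, Nat.mul_comm]
        omega
    · have hdvd : p ∣ g x + 1 := by
        rw [← ZMod.natCast_eq_zero_iff, Nat.cast_add, hc]
        simp
      obtain ⟨k, hk⟩ := hdvd
      have hk1 : 1 ≤ k := by
        rcases Nat.eq_zero_or_pos k with rfl | hpos
        · simp at hk
        · exact hpos
      have hkp : k ≤ p := by
        have hlt : p * k < p * p := by nlinarith [hp2]
        exact (Nat.lt_of_mul_lt_mul_left hlt).le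
      refine ⟨(k, false), ?_, ?_⟩
      · rw [Finset.mem_product, Finset.mem_Icc]
        exact ⟨⟨hk1, hkp⟩, Finset.mem_univ _⟩
      · show (if false = true then k*p+1 else k*p-1) = g x
        rw [if_neg (by decide), Nat.mul_comm]
        omega
  have hfiber : ∀ y ∈ F.image g,
      ((F.filter (fun x => g x = y)).card : ℝ) ≤ 2 * (y.divisors.card : ℝ) := by
    intro y hy
    obtain ⟨x0, hx0F, hx0⟩ := Finset.mem_image.1 hy
    have hy0 : y ≠ 0 := by
      obtain ⟨ha2, hb2, -, -, -⟩ := hkey x0 hx0F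
      have h4 : 4 ≤ g x0 := by
        calc 4 = 2*2 := rfl
          _ ≤ dp p x0 * dp p (pinv p x0) := Nat.mul_le_mul ha2 hb2
      omega
    have main : (F.filter (fun x => g x = y)).card ≤ 2 * y.divisors.card := by
      have himg : (F.filter (fun x => g x = y)).image (fun x : ℕ => dp p (x:ℤ)) ⊆ y.divisors := by
        intro d hd
        obtain ⟨x, hx, rfl⟩ := Finset.mem_image.1 hd
        rw [Finset.mem_filter] at hx
        rw [Nat.mem_divisors]
        refine ⟨?_, hy0⟩
        rw [← hx.2, hg]
        exact dvd_mul_right _ _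
      have hsubf : ∀ a0 ∈ (F.filter (fun x => g x = y)).image (fun x : ℕ => dp p (x:ℤ)),
          ((F.filter (fun x => g x = y)).filter (fun x : ℕ => dp p (x:ℤ) = a0)).card ≤ 2 := by
        intro a0 _
        have hsub2 : (F.filter (fun x => g x = y)).filter (fun x : ℕ => dp p (x:ℤ) = a0) ⊆
            ({a0, p - a0} : Finset ℕ) := by
          intro x hx
          simp only [Finset.mem_filter] at hx
          have hxF := hx.1.1
          rw [hF, Finset.mem_filter, Finset.mem_Icc] at hxF
          obtain ⟨⟨hx1, hx2⟩, -⟩ := hxF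
          have hxp : x < p := by omega
          have hmin2 := dp_nat_eq hxp
          have hda : min x (p - x) = a0 := by rw [← hmin2]; exact hx.2
          simp only [Finset.mem_insert, Finset.mem_singleton]
          omega
        calc ((F.filter (fun x => g x = y)).filter (fun x : ℕ => dp p (x:ℤ) = a0)).card
            ≤ ({a0, p - a0} : Finset ℕ).card := Finset.card_le_card hsub2
          _ ≤ 2 := le_trans (Finset.card_insert_le _ _) (by simp)
      calc (F.filter (fun x => g x = y)).card
          ≤ 2 * ((F.filter (fun x => g x = y)).image (fun x : ℕ => dp p (x:ℤ))).card :=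
            Finset.card_le_mul_card_image _ 2 hsubf
        _ ≤ 2 * y.divisors.card := Nat.mul_le_mul_left 2 (Finset.card_le_card himg)
    exact_mod_cast main
  have hperk : ∀ k ∈ Finset.Icc 1 p,
      hdiv (k*p+1) + hdiv (k*p-1) ≤ (16*C₀*(p:ℝ)^(δ-1)) * (k:ℝ)^(δ-1) := by
    intro k hk
    rw [Finset.mem_Icc] at hk
    have hk2 : 2 ≤ k * p := by
      have : 1*2 ≤ k*p := Nat.mul_le_mul hk.1 hp2
      omega
    set R : ℝ := (k:ℝ)*(p:ℝ) with hR
    have hR2 : (2:ℝ) ≤ R := by rw [hR]; exact_mod_cast hk2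
    have hR0 : (0:ℝ) < R := by linarith
    have claim : ∀ m : ℕ, R/2 ≤ (m:ℝ) → (m:ℝ) ≤ 2*R → hdiv m ≤ 8*C₀*R^(δ-1) := by
      intro m h1 h2
      have hm0 : (0:ℝ) < (m:ℝ) := lt_of_lt_of_le (by linarith) h1
      have hd := hC₀ m
      have hmδ : (m:ℝ)^δ ≤ ((2:ℝ)*R)^δ := Real.rpow_le_rpow hm0.le h2 hδ0.le
      have h2δ : ((2:ℝ)*R)^δ = (2:ℝ)^δ * R^δ := Real.mul_rpow (by norm_num) hR0.le
      have h2δ2 : (2:ℝ)^δ ≤ 2 := by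
        calc (2:ℝ)^δ ≤ (2:ℝ)^(1:ℝ) := Real.rpow_le_rpow_of_exponent_le (by norm_num) hδ1
          _ = 2 := Real.rpow_one 2
      have hRδ : (0:ℝ) ≤ R^δ := Real.rpow_nonneg hR0.le δ
      have t2 : (m.divisors.card:ℝ) ≤ 2*C₀*R^δ := by
        calc (m.divisors.card:ℝ) ≤ C₀ * (m:ℝ)^δ := hd
          _ ≤ C₀ * ((2:ℝ)^δ * R^δ) := by rw [← h2δ]; exact mul_le_mul_of_nonneg_left hmδ hC₀0.le
          _ ≤ 2*C₀*R^δ := by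
              nlinarith [mul_le_mul_of_nonneg_left (mul_le_mul_of_nonneg_right h2δ2 hRδ) hC₀0.le]
      have hinv : 1/(m:ℝ) ≤ 2/R := by rw [div_le_div_iff₀ hm0 hR0]; linarith
      have hstep : hdiv m ≤ 2*(2*C₀*R^δ)*(2/R) := by
        unfold hdiv
        apply mul_le_mul _ hinv (by positivity) (by positivity)
        nlinarith [t2]
      calc hdiv m ≤ 2*(2*C₀*R^δ)*(2/R) := hstep
        _ = 8*C₀*(R^δ/R) := by ring
        _ = 8*C₀*R^(δ-1) := by rw [Real.rpow_sub hR0, Real.rpow_one]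
    have hcast1 : ((k*p+1:ℕ):ℝ) = R+1 := by rw [hR]; push_cast; ring
    have hcast2 : ((k*p-1:ℕ):ℝ) = R-1 := by
      rw [Nat.cast_sub (by omega : 1 ≤ k*p), hR]; push_cast; ring
    have hc1 : hdiv (k*p+1) ≤ 8*C₀*R^(δ-1) := by
      apply claim <;> rw [hcast1] <;> linarith
    have hc2 : hdiv (k*p-1) ≤ 8*C₀*R^(δ-1) := by
      apply claim <;> rw [hcast2] <;> linarith
    have hsplit : R^(δ-1) = (p:ℝ)^(δ-1)*(k:ℝ)^(δ-1) := by
      rw [hR, mul_comm ((k:ℝ)) ((p:ℝ))]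
      exact Real.mul_rpow (Nat.cast_nonneg p) (Nat.cast_nonneg k)
    calc hdiv (k*p+1) + hdiv (k*p-1) ≤ 16*C₀*R^(δ-1) := by linarith
      _ = (16*C₀*(p:ℝ)^(δ-1))*(k:ℝ)^(δ-1) := by rw [hsplit]; ring
  calc ∑ x ∈ F, (1 : ℝ) / ((dp p x : ℝ) * (dp p (pinv p x) : ℝ))
      = ∑ x ∈ F, (1:ℝ)/((g x : ℕ):ℝ) := by
        refine Finset.sum_congr rfl fun x _ => ?_
        show (1:ℝ)/((dp p x : ℝ) * (dp p (pinv p x) : ℝ))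
            = (1:ℝ)/(((dp p x * dp p (pinv p x) : ℕ)):ℝ)
        push_cast; ring
    _ = ∑ y ∈ F.image g, ∑ x ∈ F.filter (fun x => g x = y), (1:ℝ)/((g x:ℕ):ℝ) :=
        (Finset.sum_fiberwise_of_maps_to (fun x hx => Finset.mem_image_of_mem g hx) _).symm
    _ = ∑ y ∈ F.image g, ((F.filter (fun x => g x = y)).card : ℝ) * (1/(y:ℝ)) := by
        refine Finset.sum_congr rfl fun y hy => ?_
        rw [Finset.sum_congr rfl (fun x hx => by rw [(Finset.mem_filter.1 hx).2]),
          Finset.sum_const, nsmul_eq_mul]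
    _ ≤ ∑ y ∈ F.image g, hdiv y := by
        refine Finset.sum_le_sum fun y hy => ?_
        unfold hdiv
        exact mul_le_mul_of_nonneg_right (hfiber y hy) (by positivity)
    _ ≤ ∑ y ∈ (Finset.Icc 1 p ×ˢ (Finset.univ : Finset Bool)).image G, hdiv y :=
        Finset.sum_le_sum_of_subset_of_nonneg hrep (fun y _ _ => hdiv_nonneg y)
    _ ≤ ∑ q ∈ Finset.Icc 1 p ×ˢ (Finset.univ : Finset Bool), hdiv (G q) :=
        my_sum_image_le _ G hdiv hdiv_nonneg
    _ = ∑ k ∈ Finset.Icc 1 p, (hdiv (k*p+1) + hdiv (k*p-1)) := by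
        rw [Finset.sum_product]
        refine Finset.sum_congr rfl fun k _ => ?_
        rw [Fintype.sum_bool]
        rfl
    _ ≤ ∑ k ∈ Finset.Icc 1 p, (16*C₀*(p:ℝ)^(δ-1)) * (k:ℝ)^(δ-1) := Finset.sum_le_sum hperk
    _ = (16*C₀*(p:ℝ)^(δ-1)) * ∑ k ∈ Finset.Icc 1 p, (k:ℝ)^(δ-1) :=
        (Finset.mul_sum _ _ _).symm
    _ ≤ (16*C₀*(p:ℝ)^(δ-1)) * ((p:ℝ)^δ/δ) :=
        mul_le_mul_of_nonneg_left (my_sum_rpow hδ0 hδ1 p) (by positivity)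
    _ ≤ 16*C₀/δ * (1 / (p : ℝ) + (M : ℝ) * N / (p : ℝ) ^ 2) * (p : ℝ) ^ ε := by
        have e2 : (p:ℝ)^(δ-1)*(p:ℝ)^δ = (p:ℝ)^((δ-1)+δ) := (Real.rpow_add hpR _ _).symm
        have e3 : (p:ℝ)^((δ-1)+δ) ≤ (p:ℝ)^(ε-1) := by
          apply Real.rpow_le_rpow_of_exponent_le hpR1
          have : min ε 1 ≤ ε := min_le_left _ _
          rw [hδdef] at *
          linarith
        have e4 : (p:ℝ)^(ε-1) = (1/(p:ℝ)) * (p:ℝ)^ε := by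
          rw [Real.rpow_sub hpR, Real.rpow_one]; ring
        have e5 : ((1:ℝ)/(p:ℝ)) * (p:ℝ)^ε ≤ (1 / (p : ℝ) + (M : ℝ) * N / (p : ℝ) ^ 2) * (p:ℝ)^ε := by
          apply mul_le_mul_of_nonneg_right _ (Real.rpow_nonneg hpR.le ε)
          have : (0:ℝ) ≤ (M : ℝ) * N / (p : ℝ) ^ 2 := by positivity
          linarith
        have e6 : (16*C₀*(p:ℝ)^(δ-1)) * ((p:ℝ)^δ/δ) = (16*C₀/δ) * ((p:ℝ)^(δ-1)*(p:ℝ)^δ) := by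
          ring
        rw [e6, e2]
        have e7 : (0:ℝ) ≤ 16*C₀/δ := by positivity
        calc (16*C₀/δ) * (p:ℝ)^((δ-1)+δ) ≤ (16*C₀/δ) * ((1/(p:ℝ)) * (p:ℝ)^ε) := by
              apply mul_le_mul_of_nonneg_left _ e7
              rw [← e4]; exact e3
          _ ≤ (16*C₀/δ) * ((1 / (p : ℝ) + (M : ℝ) * N / (p : ℝ) ^ 2) * (p:ℝ)^ε) :=
              mul_le_mul_of_nonneg_left e5 e7
          _ = 16*C₀/δ * (1 / (p : ℝ) + (M : ℝ) * N / (p : ℝ) ^ 2) * (p : ℝ) ^ ε := by ring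
end
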